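/- Let F₂ be the free group on two generators and Γ = ℤ × F₂. There exist a nonempty finite alphabet A and a finite set L of patterns over Γ such that the subshift of finite type X = {x : Γ → A | for all g ∈ Γ, g·x disagrees with every pattern in L} is nonempty and Stab(x) = {1} for every x ∈ X (a strongly aperiodic SFT on ℤ × F₂). -/

import Mathlib

/-- The shift action of a group `Γ` on configurations: `(g • x) h = x (g⁻¹ h)`. -/
def Shift {Γ A : Type*} [Group Γ] (g : Γ) (x : Γ → A) : Γ → A :=
  fun h => x (g⁻¹ * h)

/-- The stabilizer of a configuration under the shift action. -/
def Stab {Γ A : Type*} [Group Γ] (x : Γ → A) : Set Γ :=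
  {g | Shift g x = x}

/-- The SFT on `Γ` determined by a set `L` of patterns over `Γ` (a pattern being a finite
domain `D ⊆ Γ` together with a word on it): the configurations `x : Γ → A` all of whose
shifts `g • x` disagree with every pattern of `L`. -/
def SFT {Γ A : Type*} [Group Γ] (L : Set (Finset Γ × (Γ → A))) : Set (Γ → A) :=
  {x | ∀ g : Γ, ∀ w ∈ L, ∃ k ∈ w.1, Shift g x k ≠ w.2 k}


open List

variable {α : Type*} [DecidableEq α]

theorem reduce_concat (x : α × Bool) : ∀ (w : List (α × Bool)),
    FreeGroup.reduce (w ++ [x]) =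
      if (FreeGroup.reduce w).getLast? = some (x.1, !x.2)
      then (FreeGroup.reduce w).dropLast
      else FreeGroup.reduce w ++ [x]
  | [] => by simp
  | y :: w' => by
    have IH := reduce_concat x w'
    rw [cons_append, FreeGroup.reduce.cons, FreeGroup.reduce.cons (L := w'), IH]
    rcases hr : FreeGroup.reduce w' with _ | ⟨z, zs⟩
    · by_cases hyx : y.1 = x.1 ∧ y.2 = !x.2
      · have hxy : (⟨x.1, !x.2⟩ : α × Bool) = y := by
          obtain ⟨h1, h2⟩ := hyx; cases y; cases x; simp_all
        simp [hyx, ← hxy]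
      · have : ¬ (some y = some (x.1, !x.2)) := by
          intro h; apply hyx; cases y; cases x; simp_all
        simp [hyx, this]
    · rcases zs with _ | ⟨z', zs'⟩
      · by_cases hcan : z = (x.1, !x.2)
        · by_cases hyz : y.1 = z.1 ∧ y.2 = !z.2
          · have hyx : y = x := by
              obtain ⟨h1, h2⟩ := hyz; subst hcan; cases y; cases x; simp_all
            simp [hyz, hcan, hyx]
          · have h3 : ¬(y.1 = x.1 ∧ y.2 = x.2) := by
              subst hcan; simpa using hyz
            simp [hyz, hcan, h3]
        · have h2 : ¬ (some z = some (x.1, !x.2)) := by simpa using hcan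
          by_cases hyz : y.1 = z.1 ∧ y.2 = !z.2
          · simp [hyz, h2]
          · simp [hyz, h2]
      · by_cases hcan : (z' :: zs').getLast? = some (x.1, !x.2)
        · by_cases hyz : y.1 = z.1 ∧ y.2 = !z.2
          · rcases zs' with _ | ⟨z'', zs''⟩
            · have hz' : z' = (x.1, !x.2) := by simpa using hcan
              simp [hyz, hz']
            · simp [hyz, getLast?_cons_cons, hcan, dropLast_cons₂]
          · simp [hyz, getLast?_cons_cons, hcan, dropLast_cons₂]
        · by_cases hyz : y.1 = z.1 ∧ y.2 = !z.2
          · simp [hyz, getLast?_cons_cons, hcan]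
          · simp [hyz, getLast?_cons_cons, hcan]

theorem toWord_concat (t : FreeGroup α) (x : α × Bool) :
    (t * FreeGroup.mk [x]).toWord =
      if t.toWord.getLast? = some (x.1, !x.2) then t.toWord.dropLast
      else t.toWord ++ [x] := by
  conv_lhs => rw [← FreeGroup.mk_toWord (x := t)]
  rw [FreeGroup.mul_mk, FreeGroup.toWord_mk, reduce_concat, FreeGroup.reduce_toWord]



abbrev F2 := FreeGroup (Fin 2)

def a0 : Fin 2 × Bool := (0, true)

def letter : Fin 4 → Fin 2 × Bool
  | 0 => (0, true) | 1 => (1, true) | 2 => (0, false) | 3 => (1, false)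

def invIdx : Fin 4 → Fin 4
  | 0 => 2 | 1 => 3 | 2 => 0 | 3 => 1

def idxOf (l : Fin 2 × Bool) : Fin 4 :=
  if l.2 then (if l.1 = 0 then 0 else 1) else (if l.1 = 0 then 2 else 3)

lemma letter_idxOf : ∀ l, letter (idxOf l) = l := by decide
lemma idxOf_letter : ∀ j, _root_.idxOf (letter j) = j := by decide
lemma invIdx_invIdx : ∀ j, invIdx (invIdx j) = j := by decide
lemma letter_invIdx : ∀ j, letter (invIdx j) = ((letter j).1, !(letter j).2) := by decide
lemma letter_inj : ∀ j j', letter j = letter j' → j = j' := by decide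

def gen (j : Fin 4) : F2 := FreeGroup.mk [letter j]

def allA (t : F2) : Prop := ∀ p ∈ t.toWord, p = a0

instance (t : F2) : Decidable (allA t) := by unfold allA; infer_instance

def Dm (t : F2) : Fin 4 :=
  if allA t then 0 else ((t.toWord.getLast?).map (fun l => invIdx (idxOf l))).getD 0

def aPred : Fin 2 × Bool → Bool := fun p => decide (p = a0)

def lvl (t : F2) : ℤ :=
  2 * ((t.toWord.takeWhile aPred).length : ℤ) - t.toWord.length

lemma mem_of_getLast?' {l : List (Fin 2 × Bool)} {a : Fin 2 × Bool}
    (h : l.getLast? = some a) : a ∈ l := by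
  have := List.getLast?_eq_getLast_of_ne_nil (l := l) (by rintro rfl; simp at h)
  rw [this] at h
  exact (Option.some_injective _ h) ▸ List.getLast_mem _

lemma notAllA_ne_nil {t : F2} (h : ¬ allA t) : t.toWord ≠ [] := by
  intro hnil; exact h (fun p hp => by rw [hnil] at hp; exact absurd hp List.not_mem_nil)

theorem flow_R2 (t : F2) (j : Fin 4) : Dm t = j ∨ Dm (t * gen j) = invIdx j := by
  by_cases hA : allA t
  · by_cases hj : j = 0
    · left; rw [Dm, if_pos hA, hj]
    · right
      by_cases hc : t.toWord.getLast? = some ((letter j).1, !(letter j).2)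
      · have hmem : ((letter j).1, !(letter j).2) ∈ t.toWord := mem_of_getLast?' hc
        have ha0 : letter (invIdx j) = a0 := by rw [letter_invIdx]; exact hA _ hmem
        have hj2 : j = 2 := by
          have : invIdx j = 0 := letter_inj _ _ (by rw [ha0]; rfl)
          have := congrArg invIdx this
          rwa [invIdx_invIdx] at this
        have hW : (t * gen j).toWord = t.toWord.dropLast := by
          rw [gen, toWord_concat, if_pos hc]
        have hnA : allA (t * gen j) := by
          intro p hp
          rw [hW] at hp
          exact hA p ((List.dropLast_sublist _).subset hp)
        rw [Dm, if_pos hnA, hj2]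
        decide
      · have hW : (t * gen j).toWord = t.toWord ++ [letter j] := by
          rw [gen, toWord_concat, if_neg hc]
        have hnA : ¬ allA (t * gen j) := by
          intro h
          have := h (letter j) (by rw [hW]; exact List.mem_append_right _ (by simp))
          exact hj (letter_inj j 0 (by rw [this]; rfl))
        rw [Dm, if_neg hnA, hW, List.getLast?_concat]
        simp [idxOf_letter]
  · obtain ⟨l, hl⟩ : ∃ l, t.toWord.getLast? = some l :=
      ⟨_, List.getLast?_eq_getLast_of_ne_nil (notAllA_ne_nil hA)⟩
    by_cases hj : Dm t = j
    · left; exact hj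
    · right
      have hDm : Dm t = invIdx (idxOf l) := by rw [Dm, if_neg hA, hl]; rfl
      by_cases hc : t.toWord.getLast? = some ((letter j).1, !(letter j).2)
      · exfalso
        apply hj
        rw [hl] at hc
        have hle : l = letter (invIdx j) := by
          rw [letter_invIdx]; exact Option.some_injective _ hc
        rw [hDm, hle, idxOf_letter, invIdx_invIdx]
      · have hW : (t * gen j).toWord = t.toWord ++ [letter j] := by
          rw [gen, toWord_concat, if_neg hc]
        have hnA : ¬ allA (t * gen j) := by
          intro h
          exact hA (fun p hp => h p (by rw [hW]; exact List.mem_append_left _ hp))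
        rw [Dm, if_neg hnA, hW, List.getLast?_concat]
        simp [idxOf_letter]

lemma takeWhile_append_cons_neg (p : Fin 2 × Bool → Bool) :
    ∀ (T : List (Fin 2 × Bool)), (∀ x ∈ T, p x = true) →
    ∀ r, p r = false → ∀ u, (T ++ r :: u).takeWhile p = T
  | [], _, r, hr, u => by simp [List.takeWhile_cons_of_neg, hr]
  | a :: T', hT, r, hr, u => by
    rw [List.cons_append, List.takeWhile_cons_of_pos (hT a (by simp)),
      takeWhile_append_cons_neg p T' (fun x hx => hT x (by simp [hx])) r hr u]

lemma takeWhile_allA {t : F2} (hA : allA t) :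
    t.toWord.takeWhile aPred = t.toWord :=
  List.takeWhile_eq_self_iff.mpr (fun x hx => by simp [aPred, hA x hx])

theorem lvl_parent (t : F2) : lvl (t * gen (Dm t)) = lvl t + 1 := by
  by_cases hA : allA t
  · have hD : Dm t = 0 := by rw [Dm, if_pos hA]
    have hc : ¬ (t.toWord.getLast? = some ((letter (Dm t)).1, !(letter (Dm t)).2)) := by
      rw [hD]
      intro h
      have := hA _ (mem_of_getLast?' h)
      simp [letter, a0] at this
    have hW : (t * gen (Dm t)).toWord = t.toWord ++ [letter (Dm t)] := by
      rw [gen, toWord_concat, if_neg hc]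
    have hA' : allA (t * gen (Dm t)) := by
      intro p hp
      rw [hW] at hp
      rcases List.mem_append.mp hp with h | h
      · exact hA p h
      · rw [hD] at h; simpa [letter, a0] using h
    rw [lvl, lvl, takeWhile_allA hA, takeWhile_allA hA', hW]
    simp only [List.length_append, List.length_singleton]
    push_cast
    ring
  · obtain ⟨l, hl⟩ : ∃ l, t.toWord.getLast? = some l :=
      ⟨_, List.getLast?_eq_getLast_of_ne_nil (notAllA_ne_nil hA)⟩
    have hDm : Dm t = invIdx (idxOf l) := by rw [Dm, if_neg hA, hl]; rfl
    have hc : t.toWord.getLast? = some ((letter (Dm t)).1, !(letter (Dm t)).2) := by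
      rw [hDm, letter_invIdx, letter_idxOf, hl]
      cases l; simp
    have hW : (t * gen (Dm t)).toWord = t.toWord.dropLast := by
      rw [gen, toWord_concat, if_pos hc]
    -- decompose w = T ++ (r :: R')
    set w := t.toWord with hw
    have hsplit : w.takeWhile aPred ++ w.dropWhile aPred = w :=
      List.takeWhile_append_dropWhile
    have hRne : w.dropWhile aPred ≠ [] := by
      intro h
      apply hA
      intro p hp
      rw [← hw] at hp
      have hp2 : p ∈ w.takeWhile aPred := by rw [← hsplit, h, List.append_nil] at hp; exact hp
      have := List.mem_takeWhile_imp hp2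
      simpa [aPred] using this
    obtain ⟨r, R', hR⟩ := List.exists_cons_of_ne_nil hRne
    have hpr : aPred r = false := by
      have := List.head?_dropWhile_not aPred w
      rw [hR] at this
      simpa using this
    have hT : ∀ x ∈ w.takeWhile aPred, aPred x = true := fun x hx => List.mem_takeWhile_imp hx
    have hw2 : w = w.takeWhile aPred ++ (r :: R') := by rw [← hR, hsplit]
    have htake : (w.dropLast).takeWhile aPred = w.takeWhile aPred := by
      rcases R' with _ | ⟨r', R''⟩
      · conv_lhs => rw [hw2, List.dropLast_concat]
        rw [List.takeWhile_eq_self_iff.mpr hT]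
      · conv_lhs => rw [hw2, List.dropLast_append_cons, List.dropLast_cons₂]
        exact takeWhile_append_cons_neg aPred _ hT r hpr _
    have hlen : w.dropLast.length + 1 = w.length := by
      have hne : w ≠ [] := notAllA_ne_nil hA
      have := List.length_pos_iff.mpr hne
      rw [List.length_dropLast]
      omega
    rw [lvl, lvl, hW, htake]
    simp only [← hw]
    omega

-- ORBIT
def fwd (q : ℚ) : ℚ := if q ≤ 1 then 2*q else q/3
def bwd (q : ℚ) : ℚ := if q ≤ 2/3 then 3*q else q/2

def Orb : ℤ → ℚ := fun k => if 0 ≤ k then fwd^[k.toNat] (1/2) else bwd^[(-k).toNat] (1/2)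

lemma fwd_mem {q : ℚ} (h1 : 1/3 < q) (h2 : q ≤ 2) : 1/3 < fwd q ∧ fwd q ≤ 2 := by
  rw [fwd]; split_ifs with h <;> constructor <;> linarith

lemma bwd_mem {q : ℚ} (h1 : 1/3 < q) (h2 : q ≤ 2) : 1/3 < bwd q ∧ bwd q ≤ 2 := by
  rw [bwd]; split_ifs with h <;> constructor <;> linarith

lemma fwd_bwd {q : ℚ} (h1 : 1/3 < q) (h2 : q ≤ 2) : fwd (bwd q) = q := by
  rw [bwd]
  split_ifs with h
  · rw [fwd, if_neg (by linarith)]; ring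
  · rw [fwd, if_pos (by linarith)]; ring

lemma fwdIter_mem (n : ℕ) : 1/3 < fwd^[n] (1/2) ∧ fwd^[n] (1/2) ≤ 2 := by
  induction n with
  | zero => norm_num
  | succ n ih =>
    rw [Function.iterate_succ_apply']
    exact fwd_mem ih.1 ih.2

lemma bwdIter_mem (n : ℕ) : 1/3 < bwd^[n] (1/2) ∧ bwd^[n] (1/2) ≤ 2 := by
  induction n with
  | zero => norm_num
  | succ n ih =>
    rw [Function.iterate_succ_apply']
    exact bwd_mem ih.1 ih.2

lemma Orb_mem (k : ℤ) : 1/3 < Orb k ∧ Orb k ≤ 2 := by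
  rw [Orb]; split_ifs
  · exact fwdIter_mem _
  · exact bwdIter_mem _

lemma Orb_succ (k : ℤ) : Orb (k + 1) = fwd (Orb k) := by
  rcases lt_trichotomy k (-1) with h | h | h
  · have h1 : ¬ (0 ≤ k + 1) := by omega
    have h2 : ¬ (0 ≤ k) := by omega
    rw [Orb, Orb, if_neg h1, if_neg h2]
    have : (-k).toNat = (-(k+1)).toNat + 1 := by omega
    rw [this, Function.iterate_succ_apply']
    exact (fwd_bwd (bwdIter_mem _).1 (bwdIter_mem _).2).symm
  · subst h
    show Orb 0 = fwd (Orb (-1))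
    rw [Orb, Orb]
    norm_num
    exact (fwd_bwd (by norm_num) (by norm_num)).symm
  · have h1 : 0 ≤ k + 1 := by omega
    have h2 : 0 ≤ k := by omega
    rw [Orb, Orb, if_pos h1, if_pos h2]
    have : (k+1).toNat = k.toNat + 1 := by omega
    rw [this, Function.iterate_succ_apply']

-- FLOOR VALUES
def vI (n : ℤ) (q : ℚ) : ℤ := ⌊(n:ℚ) * q⌋ - ⌊((n:ℚ) - 1) * q⌋
def cS (n : ℤ) (q : ℚ) : ℤ := ⌊2*((n:ℚ)*q)⌋ - 2*⌊(n:ℚ)*q⌋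
def cL (n : ℤ) (q : ℚ) : ℤ := ⌊(n:ℚ)*q⌋ - 3*⌊((n:ℚ)*q)/3⌋

lemma vI_nonneg {q : ℚ} (h : 0 < q) (n : ℤ) : 0 ≤ vI n q := by
  rw [vI, sub_nonneg]
  apply Int.floor_le_floor
  nlinarith

lemma floor_add_int' (y : ℚ) (m : ℤ) : ⌊y + (m:ℚ)⌋ = ⌊y⌋ + m := Int.floor_add_intCast y m

lemma vI_le_two {q : ℚ} (h : q ≤ 2) (h0 : 0 < q) (n : ℤ) : vI n q ≤ 2 := by
  have h1 : ⌊(n:ℚ)*q⌋ ≤ ⌊((n:ℚ)-1)*q⌋ + 2 := by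
    rw [← floor_add_int' (((n:ℚ)-1)*q) 2]
    apply Int.floor_le_floor
    push_cast
    nlinarith
  rw [vI]; omega

lemma vI_le_one {q : ℚ} (h : q ≤ 1) (h0 : 0 < q) (n : ℤ) : vI n q ≤ 1 := by
  have h1 : ⌊(n:ℚ)*q⌋ ≤ ⌊((n:ℚ)-1)*q⌋ + 1 := by
    rw [← floor_add_int' (((n:ℚ)-1)*q) 1]
    apply Int.floor_le_floor
    push_cast
    nlinarith
  rw [vI]; omega

lemma vI_ge_one {q : ℚ} (h : 1 ≤ q) (n : ℤ) : 1 ≤ vI n q := by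
  have h1 : ⌊((n:ℚ)-1)*q⌋ + 1 ≤ ⌊(n:ℚ)*q⌋ := by
    rw [← floor_add_int' (((n:ℚ)-1)*q) 1]
    apply Int.floor_le_floor
    push_cast
    nlinarith
  rw [vI]; omega

lemma vI_sum3 {q : ℚ} (h : 1/3 < q) (n : ℤ) :
    1 ≤ vI n q + vI (n+1) q + vI (n+2) q := by
  have e1 : ((n+1 : ℤ):ℚ) = (n:ℚ) + 1 := by push_cast; ring
  have e2 : ((n+2 : ℤ):ℚ) = (n:ℚ) + 2 := by push_cast; ring
  rw [vI, vI, vI, e1, e2]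
  have : ⌊((n:ℚ) - 1) * q⌋ + 1 ≤ ⌊((n:ℚ) + 2) * q⌋ := by
    calc ⌊((n:ℚ) - 1) * q⌋ + 1 = ⌊((n:ℚ) - 1) * q + 1⌋ := by
          rw [show ((1:ℚ)) = ((1:ℤ):ℚ) by norm_num, Int.floor_add_intCast]
    _ ≤ ⌊((n:ℚ) + 2) * q⌋ := by apply Int.floor_le_floor; nlinarith
  have r1 : (n:ℚ) + 1 - 1 = (n:ℚ) := by ring
  have r2 : (n:ℚ) + 2 - 1 = (n:ℚ) + 1 := by ring
  rw [r1, r2]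
  omega

lemma floor_two_mul (y : ℚ) : 2*⌊y⌋ ≤ ⌊2*y⌋ ∧ ⌊2*y⌋ ≤ 2*⌊y⌋ + 1 := by
  constructor
  · apply Int.le_floor.mpr
    push_cast
    have := Int.floor_le y
    linarith
  · have : ⌊2*y⌋ < 2*⌊y⌋ + 2 := by
      apply Int.floor_lt.mpr
      push_cast
      have := Int.lt_floor_add_one y
      linarith
    omega

lemma floor_three_div (y : ℚ) : 3*⌊y/3⌋ ≤ ⌊y⌋ ∧ ⌊y⌋ ≤ 3*⌊y/3⌋ + 2 := by
  constructor
  · apply Int.le_floor.mpr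
    push_cast
    have := Int.floor_le (y/3)
    linarith
  · have : ⌊y⌋ < 3*⌊y/3⌋ + 3 := by
      apply Int.floor_lt.mpr
      push_cast
      have := Int.lt_floor_add_one (y/3)
      linarith
    omega

lemma cS_mem (n : ℤ) (q : ℚ) : 0 ≤ cS n q ∧ cS n q ≤ 1 := by
  have := floor_two_mul ((n:ℚ)*q)
  rw [cS]
  omega

lemma cL_mem (n : ℤ) (q : ℚ) : 0 ≤ cL n q ∧ cL n q ≤ 2 := by
  have := floor_three_div ((n:ℚ)*q)
  rw [cL]
  omega

lemma identS (n : ℤ) (q : ℚ) : vI n (2*q) = 2 * vI n q + cS n q - cS (n-1) q := by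
  have e : ((n - 1 : ℤ) : ℚ) = (n:ℚ) - 1 := by push_cast; ring
  rw [vI, vI, cS, cS, e]
  have a1 : (n:ℚ) * (2*q) = 2*((n:ℚ)*q) := by ring
  have a2 : ((n:ℚ) - 1) * (2*q) = 2*(((n:ℚ)-1)*q) := by ring
  rw [a1, a2]
  ring

lemma identL (n : ℤ) (q : ℚ) : 3 * vI n (q/3) = vI n q + cL (n-1) q - cL n q := by
  have e : ((n - 1 : ℤ) : ℚ) = (n:ℚ) - 1 := by push_cast; ring
  rw [vI, vI, cL, cL, e]
  have a1 : (n:ℚ) * (q/3) = ((n:ℚ)*q)/3 := by ring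
  have a2 : ((n:ℚ) - 1) * (q/3) = (((n:ℚ)-1)*q)/3 := by ring
  rw [a1, a2]
  ring

-- ===== alphabet, window, Ok, patterns =====
abbrev GG := Multiplicative ℤ × F2

def site (n : ℤ) (t : F2) : GG := (Multiplicative.ofAdd n, t)

def enc (d : Fin 4) (τ : Fin 2) (v c : Fin 3) : Fin 72 :=
  ⟨d.val*18 + τ.val*9 + v.val*3 + c.val, by omega⟩
def dOf (a : Fin 72) : Fin 4 := ⟨a.val / 18, by omega⟩
def tOf (a : Fin 72) : Fin 2 := ⟨a.val / 9 % 2, by omega⟩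
def vOf (a : Fin 72) : Fin 3 := ⟨a.val / 3 % 3, by omega⟩
def cOf (a : Fin 72) : Fin 3 := ⟨a.val % 3, by omega⟩

lemma dOf_enc (d τ v c) : dOf (enc d τ v c) = d := by
  apply Fin.ext; simp only [dOf, enc]; omega
lemma tOf_enc (d τ v c) : tOf (enc d τ v c) = τ := by
  apply Fin.ext; simp only [tOf, enc]; omega
lemma vOf_enc (d τ v c) : vOf (enc d τ v c) = v := by
  apply Fin.ext; simp only [vOf, enc]; omega
lemma cOf_enc (d τ v c) : cOf (enc d τ v c) = c := by
  apply Fin.ext; simp only [cOf, enc]; omega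

def Wlist : List GG :=
  [site 0 1, site 1 1, site 2 1] ++ (List.ofFn (fun j : Fin 4 => site 0 (gen j)))
    ++ (List.ofFn (fun j : Fin 4 => site 1 (gen j)))

def W : Finset GG := Wlist.toFinset

lemma mem_W_01 : site 0 1 ∈ W := by simp [W, Wlist]
lemma mem_W_11 : site 1 1 ∈ W := by simp [W, Wlist]
lemma mem_W_21 : site 2 1 ∈ W := by simp [W, Wlist]
lemma mem_W_0g (j : Fin 4) : site 0 (gen j) ∈ W := by
  simp only [W, Wlist, List.mem_toFinset, List.mem_append, List.mem_ofFn]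
  left; right; exact ⟨j, rfl⟩
lemma mem_W_1g (j : Fin 4) : site 1 (gen j) ∈ W := by
  simp only [W, Wlist, List.mem_toFinset, List.mem_append, List.mem_ofFn]
  right; exact ⟨j, rfl⟩

def Ok (y : GG → Fin 72) : Prop :=
  (dOf (y (site 1 1)) = dOf (y (site 0 1))) ∧
  (tOf (y (site 1 1)) = tOf (y (site 0 1))) ∧
  (∀ j : Fin 4, dOf (y (site 0 1)) = j ∨ dOf (y (site 0 (gen j))) = invIdx j) ∧
  (tOf (y (site 0 1)) = 0 → (vOf (y (site 0 1)) : ℕ) ≤ 1) ∧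
  (tOf (y (site 0 1)) = 1 → 1 ≤ (vOf (y (site 0 1)) : ℕ)) ∧
  (tOf (y (site 0 1)) = 0 →
    ¬(vOf (y (site 0 1)) = 0 ∧ vOf (y (site 1 1)) = 0 ∧ vOf (y (site 2 1)) = 0)) ∧
  (tOf (y (site 0 1)) = 0 →
    (vOf (y (site 1 (gen (dOf (y (site 0 1)))))) : ℤ)
      = 2 * (vOf (y (site 1 1)) : ℤ) + (cOf (y (site 1 1)) : ℤ) - (cOf (y (site 0 1)) : ℤ)) ∧
  (tOf (y (site 0 1)) = 1 →
    3 * (vOf (y (site 1 (gen (dOf (y (site 0 1)))))) : ℤ)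
      = (vOf (y (site 1 1)) : ℤ) + (cOf (y (site 0 1)) : ℤ) - (cOf (y (site 1 1)) : ℤ))

lemma Ok_congr {y y' : GG → Fin 72} (h : ∀ k ∈ W, y k = y' k) : Ok y ↔ Ok y' := by
  have e0 : y (site 0 1) = y' (site 0 1) := h _ mem_W_01
  have e1 : y (site 1 1) = y' (site 1 1) := h _ mem_W_11
  have e2 : y (site 2 1) = y' (site 2 1) := h _ mem_W_21
  have e3 : ∀ j : Fin 4, y (site 0 (gen j)) = y' (site 0 (gen j)) :=
    fun j => h _ (mem_W_0g j)
  have e4 : ∀ j : Fin 4, y (site 1 (gen j)) = y' (site 1 (gen j)) :=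
    fun j => h _ (mem_W_1g j)
  simp only [Ok, e0, e1, e2, e3, e4]

def LL : Set (Finset GG × (GG → Fin 72)) :=
  (fun f => (W, f)) '' {f | (∀ k, k ∉ W → f k = 0) ∧ ¬ Ok f}

lemma LL_finite : LL.Finite := by
  apply Set.Finite.image
  have hfin : Finite {f : GG → Fin 72 | (∀ k, k ∉ W → f k = 0) ∧ ¬ Ok f} := by
    apply Finite.of_injective
      (fun f : {f : GG → Fin 72 | (∀ k, k ∉ W → f k = 0) ∧ ¬ Ok f} =>
        (fun k : (W : Finset GG) => (f : GG → Fin 72) k))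
    intro f g hfg
    apply Subtype.ext
    funext k
    by_cases hk : k ∈ W
    · exact congrFun hfg ⟨k, hk⟩
    · rw [f.2.1 k hk, g.2.1 k hk]
  exact Set.toFinite _

theorem mem_SFT_iff (x : GG → Fin 72) :
    x ∈ SFT LL ↔ ∀ h : GG, Ok (fun k => x (h * k)) := by
  constructor
  · intro hx h
    by_contra hbad
    set f : GG → Fin 72 := fun k => if k ∈ W then x (h * k) else 0 with hf
    have hfOk : ¬ Ok f := by
      intro hOk
      apply hbad
      rw [Ok_congr (y' := f) (fun k hk => by simp [hf, if_pos hk])]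
      exact hOk
    have hfL : (W, f) ∈ LL := ⟨f, ⟨fun k hk => by simp [hf, if_neg hk], hfOk⟩, rfl⟩
    obtain ⟨k, hk, hne⟩ := hx h⁻¹ (W, f) hfL
    apply hne
    show x ((h⁻¹)⁻¹ * k) = f k
    rw [inv_inv, hf]
    simp [if_pos hk]
  · intro hall g w hw
    obtain ⟨f, ⟨hsupp, hnok⟩, rfl⟩ := hw
    by_contra hbad
    push_neg at hbad
    apply hnok
    rw [← Ok_congr (y := fun k => x (g⁻¹ * k)) (fun k hk => (hbad k hk))]
    exact hall g⁻¹

-- ===== the model configuration =====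
def alp (t : F2) : ℚ := Orb (lvl t)

lemma alp_mem (t : F2) : 1/3 < alp t ∧ alp t ≤ 2 := Orb_mem _
lemma alp_pos (t : F2) : 0 < alp t := lt_trans (by norm_num) (alp_mem t).1
lemma alp_parent (t : F2) : alp (t * gen (Dm t)) = fwd (alp t) := by
  rw [alp, alp, lvl_parent, Orb_succ]

def carr (n : ℤ) (q : ℚ) : ℤ := if q ≤ 1 then cS n q else cL n q

lemma vI_alp_bounds (n : ℤ) (t : F2) : 0 ≤ vI n (alp t) ∧ vI n (alp t) ≤ 2 :=
  ⟨vI_nonneg (alp_pos t) n, vI_le_two (alp_mem t).2 (alp_pos t) n⟩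

lemma carr_bounds (n : ℤ) (t : F2) : 0 ≤ carr n (alp t) ∧ carr n (alp t) ≤ 2 := by
  rw [carr]; split_ifs
  · have := cS_mem n (alp t); omega
  · have := cL_mem n (alp t); omega

def model (g : GG) : Fin 72 :=
  enc (Dm g.2) (if alp g.2 ≤ 1 then 0 else 1)
      ⟨(vI (Multiplicative.toAdd g.1) (alp g.2)).toNat,
        by have := vI_alp_bounds (Multiplicative.toAdd g.1) g.2; omega⟩
      ⟨(carr (Multiplicative.toAdd g.1) (alp g.2)).toNat,
        by have := carr_bounds (Multiplicative.toAdd g.1) g.2; omega⟩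

lemma model_site (m : ℤ) (u : F2) :
    model (site m u) = enc (Dm u) (if alp u ≤ 1 then 0 else 1)
      ⟨(vI m (alp u)).toNat, by have := vI_alp_bounds m u; omega⟩
      ⟨(carr m (alp u)).toNat, by have := carr_bounds m u; omega⟩ := rfl

lemma mdC (m : ℤ) (u : F2) : dOf (model (site m u)) = Dm u := by
  rw [model_site, dOf_enc]
lemma mtC (m : ℤ) (u : F2) :
    tOf (model (site m u)) = (if alp u ≤ 1 then 0 else 1) := by
  rw [model_site, tOf_enc]
lemma mvC (m : ℤ) (u : F2) : ((vOf (model (site m u)) : ℕ) : ℤ) = vI m (alp u) := by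
  rw [model_site, vOf_enc]
  have := vI_alp_bounds m u
  simp only []
  omega
lemma mcC (m : ℤ) (u : F2) : ((cOf (model (site m u)) : ℕ) : ℤ) = carr m (alp u) := by
  rw [model_site, cOf_enc]
  have := carr_bounds m u
  simp only []
  omega

lemma site_mul (n i : ℤ) (t u : F2) : site n t * site i u = site (n + i) (t * u) := by
  simp only [site, Prod.mk_mul_mk, Prod.mk.injEq, ← ofAdd_add]

theorem Ok_site (n : ℤ) (t : F2) : Ok (fun k => model (site n t * k)) := by
  have halt : ∀ halp : ¬ alp t ≤ 1, (1 : ℚ) ≤ alp t := fun halp => le_of_lt (lt_of_not_ge halp)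
  refine ⟨?_, ?_, ?_, ?_, ?_, ?_, ?_, ?_⟩
  · simp only [site_mul, mul_one, mdC]
  · simp only [site_mul, mul_one, mtC]
  · intro j
    simp only [site_mul, mul_one, mdC]
    exact flow_R2 t j
  · simp only [site_mul, mul_one, mtC]
    intro htau
    have halp : alp t ≤ 1 := by
      by_contra hc; rw [if_neg hc] at htau; exact absurd htau (by decide)
    have h1 := vI_le_one halp (alp_pos t) (n + 0)
    have h2 := mvC (n+0) t
    omega
  · simp only [site_mul, mul_one, mtC]
    intro htau
    have halp : ¬ (alp t ≤ 1) := by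
      intro hc; rw [if_pos hc] at htau; exact absurd htau (by decide)
    have h1 := vI_ge_one (halt halp) (n + 0)
    have h2 := mvC (n+0) t
    omega
  · simp only [site_mul, mul_one, mtC]
    rintro htau ⟨h0, h1, h2⟩
    have hs := vI_sum3 (alp_mem t).1 (n + 0)
    have e0 := mvC (n+0) t
    have e1 := mvC (n+1) t
    have e2 := mvC (n+2) t
    have hv0 : (vOf (model (site (n+0) t)) : ℕ) = 0 := by rw [h0]; rfl
    have hv1 : (vOf (model (site (n+1) t)) : ℕ) = 0 := by rw [h1]; rfl
    have hv2 : (vOf (model (site (n+2) t)) : ℕ) = 0 := by rw [h2]; rfl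
    rw [show n + 0 + 1 = n + 1 by ring, show n + 0 + 2 = n + 2 by ring] at hs
    omega
  · simp only [site_mul, mul_one, mtC, mdC]
    intro htau
    have halp : alp t ≤ 1 := by
      by_contra hc; rw [if_neg hc] at htau; exact absurd htau (by decide)
    have hpar : alp (t * gen (Dm t)) = 2 * alp t := by
      rw [alp_parent, fwd, if_pos halp]
    have eP : ((vOf (model (site (n+1) (t * gen (Dm t)))) : ℕ) : ℤ)
        = vI (n+1) (2 * alp t) := by rw [mvC, hpar]
    have e1 := mvC (n+1) t
    have ec1 := mcC (n+1) t
    have ec0 := mcC (n+0) t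
    have hcarr : ∀ m : ℤ, carr m (alp t) = cS m (alp t) := fun m => if_pos halp
    have hid := identS (n+1) (alp t)
    rw [show n + 1 - 1 = n + 0 by ring] at hid
    rw [hcarr] at ec1 ec0
    omega
  · simp only [site_mul, mul_one, mtC, mdC]
    intro htau
    have halp : ¬ (alp t ≤ 1) := by
      intro hc; rw [if_pos hc] at htau; exact absurd htau (by decide)
    have hpar : alp (t * gen (Dm t)) = alp t / 3 := by
      rw [alp_parent, fwd, if_neg halp]
    have eP : ((vOf (model (site (n+1) (t * gen (Dm t)))) : ℕ) : ℤ)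
        = vI (n+1) (alp t / 3) := by rw [mvC, hpar]
    have e1 := mvC (n+1) t
    have ec1 := mcC (n+1) t
    have ec0 := mcC (n+0) t
    have hcarr : ∀ m : ℤ, carr m (alp t) = cL m (alp t) := fun m => if_neg halp
    have hid := identL (n+1) (alp t)
    rw [show n + 1 - 1 = n + 0 by ring] at hid
    rw [hcarr] at ec1 ec0
    omega

theorem model_Ok : ∀ h : GG, Ok (fun k => model (h * k)) := by
  intro h
  have hh : h = site (Multiplicative.toAdd h.1) h.2 := by
    obtain ⟨a, u⟩ := h
    simp [site]
  rw [hh]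
  exact Ok_site _ _

-- gen algebra
lemma gen_mul_inv (j : Fin 4) : gen j * gen (invIdx j) = 1 := by
  apply FreeGroup.toWord_injective
  rw [gen, gen, FreeGroup.mul_mk, FreeGroup.toWord_mk, FreeGroup.toWord_one]
  fin_cases j <;> rfl

lemma of_zero_eq_gen : FreeGroup.of (0 : Fin 2) = gen 0 := by
  apply FreeGroup.toWord_injective
  rw [FreeGroup.toWord_of, gen, FreeGroup.toWord_mk]
  rfl

lemma of_one_eq_gen : FreeGroup.of (1 : Fin 2) = gen 1 := by
  apply FreeGroup.toWord_injective
  rw [FreeGroup.toWord_of, gen, FreeGroup.toWord_mk]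
  rfl

lemma inv_of_zero_eq_gen : (FreeGroup.of (0 : Fin 2))⁻¹ = gen 2 := by
  apply FreeGroup.toWord_injective
  rw [FreeGroup.toWord_inv, FreeGroup.toWord_of, gen, FreeGroup.toWord_mk]
  rfl

lemma inv_of_one_eq_gen : (FreeGroup.of (1 : Fin 2))⁻¹ = gen 3 := by
  apply FreeGroup.toWord_injective
  rw [FreeGroup.toWord_inv, FreeGroup.toWord_of, gen, FreeGroup.toWord_mk]
  rfl

-- ===== aperiodicity =====
lemma fin2_cases (a : Fin 2) : a = 0 ∨ a = 1 := by
  fin_cases a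
  · exact Or.inl rfl
  · exact Or.inr rfl

section Aper

variable (x : GG → Fin 72)

def xd (t : F2) : Fin 4 := dOf (x (site 0 t))
def xt (t : F2) : Fin 2 := tOf (x (site 0 t))
def par (t : F2) : F2 := t * gen (xd x t)
def vv (n : ℤ) (t : F2) : ℤ := ((vOf (x (site n t)) : ℕ) : ℤ)
def cc (n : ℤ) (t : F2) : ℤ := ((cOf (x (site n t)) : ℕ) : ℤ)

variable (Hok : ∀ h : GG, Ok (fun k => x (h * k)))
include Hok

lemma okAt (n : ℤ) (t : F2) : Ok (fun k => x (site n t * k)) := Hok _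

lemma xrow_d (n : ℤ) (t : F2) : dOf (x (site n t)) = xd x t := by
  have step : ∀ j : ℤ, dOf (x (site (j+1) t)) = dOf (x (site j t)) := by
    intro j
    have h := (okAt x Hok j t).1
    simpa only [site_mul, mul_one, add_zero] using h
  induction n using Int.induction_on with
  | zero => rfl
  | succ k ih => rw [step k]; exact ih
  | pred k ih => rw [show (-(k:ℤ) - 1) = (-(k:ℤ) - 1) from rfl, ← ih, ← step (-(k:ℤ)-1),
      show (-(k:ℤ) - 1 + 1) = -(k:ℤ) by ring]

lemma xrow_t (n : ℤ) (t : F2) : tOf (x (site n t)) = xt x t := by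
  have step : ∀ j : ℤ, tOf (x (site (j+1) t)) = tOf (x (site j t)) := by
    intro j
    have h := (okAt x Hok j t).2.1
    simpa only [site_mul, mul_one, add_zero] using h
  induction n using Int.induction_on with
  | zero => rfl
  | succ k ih => rw [step k]; exact ih
  | pred k ih => rw [← ih, ← step (-(k:ℤ)-1), show (-(k:ℤ) - 1 + 1) = -(k:ℤ) by ring]

lemma xR2 (t : F2) (j : Fin 4) : xd x t = j ∨ xd x (t * gen j) = invIdx j := by
  have h := (okAt x Hok 0 t).2.2.1 j
  simpa only [site_mul, mul_one, add_zero, xd] using h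

lemma xLlower (t : F2) (ht : xt x t = 1) (n : ℤ) : 1 ≤ vv x n t := by
  have h := (okAt x Hok n t).2.2.2.2.1
  simp only [site_mul, mul_one, add_zero] at h
  have := h (by rw [xrow_t x Hok]; exact ht)
  rw [vv]
  omega

lemma xno000 (t : F2) (ht : xt x t = 0) (n : ℤ) :
    1 ≤ vv x n t + vv x (n+1) t + vv x (n+2) t := by
  have h := (okAt x Hok n t).2.2.2.2.2.1
  simp only [site_mul, mul_one, add_zero] at h
  have h2 := h (by rw [xrow_t x Hok]; exact ht)
  rw [vv, vv, vv]
  have b0 : (vOf (x (site n t)) : ℕ) < 3 := (vOf _).isLt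
  have b1 : (vOf (x (site (n+1) t)) : ℕ) < 3 := (vOf _).isLt
  have b2 : (vOf (x (site (n+2) t)) : ℕ) < 3 := (vOf _).isLt
  rcases Nat.eq_zero_or_pos (vOf (x (site n t)) : ℕ) with h0 | h0
  · rcases Nat.eq_zero_or_pos (vOf (x (site (n+1) t)) : ℕ) with h1 | h1
    · rcases Nat.eq_zero_or_pos (vOf (x (site (n+2) t)) : ℕ) with hh2 | hh2
      · exact absurd ⟨Fin.ext h0, Fin.ext h1, Fin.ext hh2⟩ h2
      · omega
    · omega
  · omega

omit Hok in
lemma vv_bounds (n : ℤ) (t : F2) : 0 ≤ vv x n t ∧ vv x n t ≤ 2 := by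
  rw [vv]
  have := (vOf (x (site n t))).isLt
  omega

omit Hok in
lemma cc_bounds (n : ℤ) (t : F2) : 0 ≤ cc x n t ∧ cc x n t ≤ 2 := by
  rw [cc]
  have := (cOf (x (site n t))).isLt
  omega

lemma xedgeS (t : F2) (ht : xt x t = 0) (n : ℤ) :
    vv x (n+1) (par x t) = 2 * vv x (n+1) t + cc x (n+1) t - cc x n t := by
  have h := (okAt x Hok n t).2.2.2.2.2.2.1
  simp only [site_mul, mul_one, add_zero] at h
  have h2 := h (by rw [xrow_t x Hok]; exact ht)
  rw [xrow_d x Hok] at h2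
  rw [vv, vv, cc, cc, par]
  exact_mod_cast h2

lemma xedgeL (t : F2) (ht : xt x t = 1) (n : ℤ) :
    3 * vv x (n+1) (par x t) = vv x (n+1) t + cc x n t - cc x (n+1) t := by
  have h := (okAt x Hok n t).2.2.2.2.2.2.2
  simp only [site_mul, mul_one, add_zero] at h
  have h2 := h (by rw [xrow_t x Hok]; exact ht)
  rw [xrow_d x Hok] at h2
  rw [vv, vv, cc, cc, par]
  exact_mod_cast h2


def Sm (t : F2) (N : ℕ) : ℤ := ∑ i ∈ Finset.range N, vv x ((i:ℤ)+1) t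

omit Hok in
lemma Sm_bounds (t : F2) (N : ℕ) : 0 ≤ Sm x t N ∧ Sm x t N ≤ 2 * N := by
  constructor
  · apply Finset.sum_nonneg
    intro i _
    exact (vv_bounds x _ _).1
  · calc Sm x t N ≤ ∑ _i ∈ Finset.range N, (2:ℤ) :=
          Finset.sum_le_sum (fun i _ => (vv_bounds x _ _).2)
    _ = 2 * N := by rw [Finset.sum_const, Finset.card_range]; ring

lemma Sm_lower (t : F2) (M : ℕ) : (M : ℤ) ≤ Sm x t (3*M) := by
  induction M with
  | zero => simp [Sm]
  | succ M ih =>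
    have e : 3 * (M+1) = (3*M) + 1 + 1 + 1 := by ring
    rw [e, Sm, Finset.sum_range_succ, Finset.sum_range_succ, Finset.sum_range_succ, ← Sm]
    have c1 : ((3*M+1 : ℕ):ℤ) + 1 = ((3*M:ℕ):ℤ) + 1 + 1 := by push_cast; ring
    have c2 : ((3*M+1+1 : ℕ):ℤ) + 1 = ((3*M:ℕ):ℤ) + 1 + 2 := by push_cast; ring
    rw [c1, c2]
    have tri : 1 ≤ vv x (((3*M:ℕ):ℤ)+1) t + vv x (((3*M:ℕ):ℤ)+1+1) t
        + vv x (((3*M:ℕ):ℤ)+1+2) t := by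
      rcases fin2_cases (xt x t) with h | h
      · exact xno000 x Hok t h _
      · have l1 := xLlower x Hok t h (((3*M:ℕ):ℤ)+1)
        have l2 := xLlower x Hok t h (((3*M:ℕ):ℤ)+1+1)
        have l3 := xLlower x Hok t h (((3*M:ℕ):ℤ)+1+2)
        omega
    push_cast at tri ih ⊢
    omega


lemma sum_edgeS (t : F2) (ht : xt x t = 0) (N : ℕ) :
    Sm x (par x t) N = 2 * Sm x t N + cc x N t - cc x 0 t := by
  have e : ∀ i ∈ Finset.range N,
      vv x ((i:ℤ)+1) (par x t)
        = 2 * vv x ((i:ℤ)+1) t + (cc x ((i:ℤ)+1) t - cc x (i:ℤ) t) := by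
    intro i _
    have := xedgeS x Hok t ht (i:ℤ)
    omega
  have tele : ∑ i ∈ Finset.range N, (cc x ((i:ℤ)+1) t - cc x (i:ℤ) t)
      = cc x (N:ℤ) t - cc x 0 t := by
    have := Finset.sum_range_sub (f := fun i : ℕ => cc x (i:ℤ) t) N
    simpa using this
  have main : Sm x (par x t) N = 2 * Sm x t N + (cc x (N:ℤ) t - cc x 0 t) := by
    rw [Sm, Finset.sum_congr rfl e, Finset.sum_add_distrib, ← Finset.mul_sum, ← Sm, tele]
  rw [main]
  ring

lemma sum_edgeL (t : F2) (ht : xt x t = 1) (N : ℕ) :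
    3 * Sm x (par x t) N = Sm x t N + cc x 0 t - cc x N t := by
  have e : ∀ i ∈ Finset.range N,
      vv x ((i:ℤ)+1) t
        = 3 * vv x ((i:ℤ)+1) (par x t) + (cc x ((i:ℤ)+1) t - cc x (i:ℤ) t) := by
    intro i _
    have := xedgeL x Hok t ht (i:ℤ)
    omega
  have tele : ∑ i ∈ Finset.range N, (cc x ((i:ℤ)+1) t - cc x (i:ℤ) t)
      = cc x (N:ℤ) t - cc x 0 t := by
    have := Finset.sum_range_sub (f := fun i : ℕ => cc x (i:ℤ) t) N
    simpa using this
  have main : Sm x t N = 3 * Sm x (par x t) N + (cc x (N:ℤ) t - cc x 0 t) := by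
    conv_lhs => rw [Sm, Finset.sum_congr rfl e]
    rw [Finset.sum_add_distrib, ← Finset.mul_sum, ← Sm, tele]
  rw [main]
  ring

lemma chainRel (k : ℕ) (t : F2) :
    ∃ a b : ℕ, a + b = k ∧ ∀ N : ℕ,
      |3^b * Sm x ((par x)^[k] t) N - 2^a * Sm x t N| ≤ 9^(k+1) := by
  induction k with
  | zero =>
    refine ⟨0, 0, rfl, fun N => ?_⟩
    simp only [pow_zero, one_mul, Function.iterate_zero, id_eq, sub_self, abs_zero]
    positivity
  | succ k ih =>
    obtain ⟨a, b, hab, hle⟩ := ih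
    have hb : b ≤ k := by omega
    have h3b : (3:ℤ)^b ≤ 9^(k+1) := by
      calc (3:ℤ)^b ≤ 3^k := pow_le_pow_right₀ (by norm_num) hb
      _ ≤ 9^k := pow_le_pow_left₀ (by norm_num) (by norm_num) k
      _ ≤ 9^(k+1) := pow_le_pow_right₀ (by norm_num) (by omega)
    have h3bpos : (0:ℤ) < 3^b := by positivity
    have h9 : (9:ℤ)^(k+1+1) = 9 * 9^(k+1) := by rw [pow_succ]; ring
    set u := (par x)^[k] t with hu
    rcases fin2_cases (xt x u) with hτ | hτ
    · refine ⟨a+1, b, by omega, fun N => ?_⟩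
      rw [Function.iterate_succ_apply']
      have habs := abs_le.mp (hle N)
      have hcN := cc_bounds x (N:ℤ) u
      have hc0 := cc_bounds x 0 u
      have hup : 3^b * (cc x (N:ℤ) u - cc x 0 u) ≤ 3^b * 2 :=
        mul_le_mul_of_nonneg_left (by omega) h3bpos.le
      have hdn : 3^b * (-2 : ℤ) ≤ 3^b * (cc x (N:ℤ) u - cc x 0 u) :=
        mul_le_mul_of_nonneg_left (by omega) h3bpos.le
      have hedge := sum_edgeS x Hok u hτ N
      have key : 3^b * Sm x (par x u) N - 2^(a+1) * Sm x t N
          = 2*(3^b * Sm x u N - 2^a * Sm x t N) + 3^b * (cc x (N:ℤ) u - cc x 0 u) := by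
        rw [hedge]; ring
      rw [abs_le, key]
      constructor <;> linarith
    · refine ⟨a, b+1, by omega, fun N => ?_⟩
      rw [Function.iterate_succ_apply']
      have habs := abs_le.mp (hle N)
      have hcN := cc_bounds x (N:ℤ) u
      have hc0 := cc_bounds x 0 u
      have hup2 : 3^b * (cc x 0 u - cc x (N:ℤ) u) ≤ 3^b * 2 :=
        mul_le_mul_of_nonneg_left (by omega) h3bpos.le
      have hdn2 : 3^b * (-2 : ℤ) ≤ 3^b * (cc x 0 u - cc x (N:ℤ) u) :=
        mul_le_mul_of_nonneg_left (by omega) h3bpos.le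
      have hedge := sum_edgeL x Hok u hτ N
      have key : 3^(b+1) * Sm x (par x u) N - 2^a * Sm x t N
          = (3^b * Sm x u N - 2^a * Sm x t N) + 3^b * (cc x 0 u - cc x (N:ℤ) u) := by
        have e1 : (3:ℤ)^(b+1) * Sm x (par x u) N = 3^b * (3 * Sm x (par x u) N) := by
          rw [pow_succ]; ring
        rw [e1, hedge]; ring
      rw [abs_le, key]
      constructor <;> linarith

def Mrg (u v : F2) : Prop := ∃ k l : ℕ, (par x)^[k] u = (par x)^[l] v

omit Hok in
lemma mrg_refl (u : F2) : Mrg x u u := ⟨0, 0, rfl⟩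

omit Hok in
lemma mrg_symm {u v : F2} (h : Mrg x u v) : Mrg x v u := by
  obtain ⟨k, l, h⟩ := h
  exact ⟨l, k, h.symm⟩

omit Hok in
lemma mrg_trans {u v w : F2} (h1 : Mrg x u v) (h2 : Mrg x v w) : Mrg x u w := by
  obtain ⟨k, l, h1⟩ := h1
  obtain ⟨k', l', h2⟩ := h2
  refine ⟨k' + k, l + l', ?_⟩
  rw [Function.iterate_add_apply, h1, ← Function.iterate_add_apply, Nat.add_comm k' l,
    Function.iterate_add_apply, h2, ← Function.iterate_add_apply]

lemma mrg_adj (u : F2) (j : Fin 4) : Mrg x u (u * gen j) := by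
  rcases xR2 x Hok u j with h | h
  · refine ⟨1, 0, ?_⟩
    simp only [Function.iterate_one, Function.iterate_zero, id_eq, par, h]
  · refine ⟨0, 1, ?_⟩
    simp only [Function.iterate_one, Function.iterate_zero, id_eq, par, h]
    rw [mul_assoc, gen_mul_inv, mul_one]

lemma mrg_all (z : F2) : ∀ u : F2, Mrg x u (u * z) := by
  refine FreeGroup.induction_on z ?_ ?_ ?_ ?_
  · intro u
    rw [mul_one]
    exact mrg_refl x u
  · intro i u
    fin_cases i
    · have h := mrg_adj x Hok u 0
      rw [← of_zero_eq_gen] at h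
      exact h
    · have h := mrg_adj x Hok u 1
      rw [← of_one_eq_gen] at h
      exact h
  · intro i _ u
    fin_cases i
    · have h := mrg_adj x Hok u 2
      rw [← inv_of_zero_eq_gen] at h
      exact h
    · have h := mrg_adj x Hok u 3
      rw [← inv_of_one_eq_gen] at h
      exact h
  · intro z w hz hw u
    have h := mrg_trans x (hz u) (hw (u * z))
    rwa [mul_assoc] at h

end Aper

-- number theory helper
lemma pow23_inj {a b a' b' : ℕ} (h : 2^a * 3^b = 2^a' * 3^b') : a = a' ∧ b = b' := by
  have hf := congrArg Nat.factorization h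
  rw [Nat.factorization_mul (by positivity) (by positivity),
    Nat.factorization_mul (by positivity) (by positivity),
    Nat.Prime.factorization_pow Nat.prime_two,
    Nat.Prime.factorization_pow Nat.prime_three,
    Nat.Prime.factorization_pow Nat.prime_two,
    Nat.Prime.factorization_pow Nat.prime_three] at hf
  constructor
  · have h2 := DFunLike.congr_fun hf 2
    simpa [Finsupp.single_apply] using h2
  · have h3 := DFunLike.congr_fun hf 3
    simpa [Finsupp.single_apply] using h3

-- window shift
lemma sum_step (f : ℤ → ℤ) (a : ℤ) (N : ℕ) :
    ∑ i ∈ Finset.range N, f (a + 1 + i) =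
      ∑ i ∈ Finset.range N, f (a + i) + f (a + N) - f a := by
  have h1 := Finset.sum_range_succ' (fun i : ℕ => f (a + i)) N
  have h2 := Finset.sum_range_succ (fun i : ℕ => f (a + i)) N
  have e : ∀ i ∈ Finset.range N, f (a + 1 + (i:ℤ)) = f (a + ((i+1 : ℕ) : ℤ)) := by
    intro i _
    congr 1
    push_cast
    ring
  rw [Finset.sum_congr rfl e]
  simp only [Nat.cast_zero, add_zero] at h1
  omega

lemma sum_window (f : ℤ → ℤ) (h0 : ∀ n, 0 ≤ f n) (h2 : ∀ n, f n ≤ 2) (a : ℤ) :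
    ∀ (d : ℕ) (N : ℕ),
      |∑ i ∈ Finset.range N, f (a + d + i) - ∑ i ∈ Finset.range N, f (a + i)|
        ≤ 2 * d := by
  intro d
  induction d with
  | zero => intro N; simp
  | succ d ih =>
    intro N
    have hstep := sum_step f (a + d) N
    have e : ∀ i ∈ Finset.range N, f (a + ((d:ℕ)+1 : ℕ) + (i:ℤ)) = f (a + (d:ℤ) + 1 + i) := by
      intro i _
      congr 1
      push_cast
      ring
    rw [Finset.sum_congr rfl e]
    have hb1 := h0 (a + d + N)
    have hb2 := h2 (a + d + N)
    have hb3 := h0 (a + d)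
    have hb4 := h2 (a + d)
    have hih := abs_le.mp (ih N)
    rw [abs_le]
    push_cast
    push_cast at hih
    constructor <;> [skip; skip] <;> omega

-- ===== Step A : the free-group part of any period is trivial =====
theorem stepA (x : GG → Fin 72) (Hok : ∀ h : GG, Ok (fun k => x (h * k)))
    (m : ℤ) (s : F2)
    (hinv : ∀ (n : ℤ) (t : F2), x (site n (s⁻¹ * t)) = x (site (n + m) t)) :
    s = 1 := by
  have dinv : ∀ t, xd x (s⁻¹ * t) = xd x t := by
    intro t
    rw [xd, hinv 0 t, xrow_d x Hok]
  have pinv : ∀ t, par x (s⁻¹ * t) = s⁻¹ * par x t := by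
    intro t
    rw [par, par, dinv, mul_assoc]
  have iterinv : ∀ (k : ℕ) (t : F2), (par x)^[k] (s⁻¹ * t) = s⁻¹ * (par x)^[k] t := by
    intro k
    induction k with
    | zero => intro t; simp
    | succ k ih =>
      intro t
      rw [Function.iterate_succ_apply', Function.iterate_succ_apply', ih, pinv]
  have vinv : ∀ (n : ℤ) (t : F2), vv x n (s⁻¹ * t) = vv x (n + m) t := by
    intro n t
    rw [vv, vv, hinv]
  -- shifted-window bound
  have sminv : ∀ (t : F2) (N : ℕ),
      |Sm x (s⁻¹ * t) N - Sm x t N| ≤ 2 * (m.natAbs : ℤ) := by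
    intro t N
    set f : ℤ → ℤ := fun n => vv x n t with hf
    have h0 : ∀ n, 0 ≤ f n := fun n => (vv_bounds x n t).1
    have h2 : ∀ n, f n ≤ 2 := fun n => (vv_bounds x n t).2
    have hSm : Sm x (s⁻¹ * t) N = ∑ i ∈ Finset.range N, f (1 + m + i) := by
      rw [Sm]
      apply Finset.sum_congr rfl
      intro i _
      rw [vinv, hf]
      congr 1
      ring
    have hSm2 : Sm x t N = ∑ i ∈ Finset.range N, f (1 + i) := by
      rw [Sm]
      apply Finset.sum_congr rfl
      intro i _
      rw [hf]
      congr 1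
      ring
    rcases le_or_gt 0 m with hm | hm
    · have hw := sum_window f h0 h2 1 m.natAbs N
      have e : ∀ i ∈ Finset.range N, f ((1:ℤ) + (m.natAbs:ℤ) + i) = f (1 + m + i) := by
        intro i _
        congr 1
        omega
      rw [Finset.sum_congr rfl e] at hw
      rw [hSm, hSm2]
      exact hw
    · have hw := sum_window f h0 h2 (1 + m) m.natAbs N
      have e : ∀ i ∈ Finset.range N, f ((1:ℤ) + m + (m.natAbs:ℤ) + i) = f (1 + i) := by
        intro i _
        congr 1
        omega
      rw [Finset.sum_congr rfl e] at hw
      rw [hSm, hSm2, abs_sub_comm]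
      exact hw
  -- merge the flows of 1 and s⁻¹
  obtain ⟨k, l, hkl⟩ := mrg_all x Hok s⁻¹ 1
  rw [one_mul] at hkl
  have hkl2 : (par x)^[k] (1:F2) = s⁻¹ * (par x)^[l] 1 := by
    rw [hkl]
    conv_lhs => rw [show (s⁻¹ : F2) = s⁻¹ * 1 by rw [mul_one]]
    rw [iterinv]
  obtain ⟨a1, b1, hab1, h1⟩ := chainRel x Hok k (1:F2)
  obtain ⟨a2, b2, hab2, h2⟩ := chainRel x Hok l (1:F2)
  have hk : k = l := by
    by_contra hkn
    -- the coefficient is a nonzero integer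
    have hDne : (3:ℤ)^b2 * 2^a1 - 3^b1 * 2^a2 ≠ 0 := by
      intro hD
      have hz : (2:ℕ)^a1 * 3^b2 = 2^a2 * 3^b1 := by
        have hz' : (3:ℤ)^b2 * 2^a1 = 3^b1 * 2^a2 := by omega
        exact_mod_cast (by push_cast; linarith : ((2^a1 * 3^b2 : ℕ) : ℤ) = ((2^a2 * 3^b1 : ℕ) : ℤ))
      obtain ⟨ha, hb⟩ := pow23_inj hz
      omega
    set D : ℤ := 3^b2 * 2^a1 - 3^b1 * 2^a2 with hD
    have hDge : 1 ≤ |D| := by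
      rcases abs_pos.mpr hDne with h
      omega
    set C : ℤ := 3^b2 * 9^(k+1) + 3^b1 * 3^b2 * (2 * (m.natAbs:ℤ)) + 3^b1 * 9^(l+1) with hC
    have hCb : ∀ N : ℕ, Sm x 1 N ≤ C := by
      intro N
      set R : ℤ := Sm x ((par x)^[k] (1:F2)) N with hR
      set Pl : ℤ := Sm x ((par x)^[l] (1:F2)) N with hPl
      set Q : ℤ := Sm x (1:F2) N with hQ
      have e1 := abs_le.mp (h1 N)
      have e2 := abs_le.mp (h2 N)
      have e3 : |R - Pl| ≤ 2 * (m.natAbs:ℤ) := by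
        rw [hR, hkl2]
        exact sminv _ N
      have e3' := abs_le.mp e3
      have hiden : D * Q = 3^b2 * (2^a1 * Q - 3^b1 * R)
          + 3^b1 * 3^b2 * (R - Pl) + 3^b1 * (3^b2 * Pl - 2^a2 * Q) := by
        rw [hD]; ring
      have p32 : (0:ℤ) < 3^b2 := by positivity
      have p31 : (0:ℤ) < 3^b1 := by positivity
      have q1u : 3^b2 * (2^a1 * Q - 3^b1 * R) ≤ 3^b2 * 9^(k+1) :=
        mul_le_mul_of_nonneg_left (by linarith) p32.le
      have q1d : 3^b2 * (-(9:ℤ)^(k+1)) ≤ 3^b2 * (2^a1 * Q - 3^b1 * R) :=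
        mul_le_mul_of_nonneg_left (by linarith) p32.le
      have q2u : 3^b1 * 3^b2 * (R - Pl) ≤ 3^b1 * 3^b2 * (2 * (m.natAbs:ℤ)) :=
        mul_le_mul_of_nonneg_left (by linarith) (by positivity)
      have q2d : 3^b1 * 3^b2 * (-(2 * (m.natAbs:ℤ))) ≤ 3^b1 * 3^b2 * (R - Pl) :=
        mul_le_mul_of_nonneg_left (by linarith) (by positivity)
      have q3u : 3^b1 * (3^b2 * Pl - 2^a2 * Q) ≤ 3^b1 * 9^(l+1) :=
        mul_le_mul_of_nonneg_left (by linarith) p31.le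
      have q3d : 3^b1 * (-(9:ℤ)^(l+1)) ≤ 3^b1 * (3^b2 * Pl - 2^a2 * Q) :=
        mul_le_mul_of_nonneg_left (by linarith) p31.le
      have hDQ : |D * Q| ≤ C := by
        rw [abs_le]
        constructor
        · rw [hiden, hC]; linarith
        · rw [hiden, hC]; linarith
      have hQ0 : 0 ≤ Q := (Sm_bounds x 1 N).1
      have : Q ≤ |D| * Q := le_mul_of_one_le_left hQ0 hDge
      have : |D| * Q ≤ C := by rw [← abs_of_nonneg hQ0, ← abs_mul]; exact hDQ
      linarith [le_mul_of_one_le_left hQ0 hDge]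
    have hCpos : 0 ≤ C := le_trans (Sm_bounds x 1 0).1 (hCb 0)
    have hbig := Sm_lower x Hok 1 (C.toNat + 1)
    have := hCb (3 * (C.toNat + 1))
    omega
  -- conclude
  rw [hk] at hkl2
  have : s⁻¹ * (par x)^[l] (1:F2) = 1 * (par x)^[l] 1 := by
    rw [one_mul, ← hkl2]
  have hs1 : s⁻¹ = 1 := mul_right_cancel this
  rwa [inv_eq_one] at hs1

-- ===== Step B : the ℤ part of any period is trivial =====
theorem stepB (x : GG → Fin 72) (Hok : ∀ h : GG, Ok (fun k => x (h * k)))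
    (m : ℤ)
    (hinv : ∀ (n : ℤ) (t : F2), x (site n t) = x (site (n + m) t))
    (hm : m ≠ 0) : False := by
  set d : ℕ := m.natAbs with hd
  have hd1 : 1 ≤ d := by omega
  have per : ∀ (n : ℤ) (t : F2), x (site (n + d) t) = x (site n t) := by
    intro n t
    rcases le_or_gt 0 m with h | h
    · rw [show ((d:ℤ)) = m by omega]
      exact (hinv n t).symm
    · rw [show ((d:ℤ)) = -m by omega]
      have := hinv (n + -m) t
      rw [show n + -m + m = n by ring] at this
      exact this
  have per3 : ∀ (n : ℤ) (t : F2), x (site (n + 3*(d:ℤ)) t) = x (site n t) := by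
    intro n t
    have p1 := per (n + 2*(d:ℤ)) t
    have p2 := per (n + (d:ℤ)) t
    have p3 := per n t
    rw [show n + 2*(d:ℤ) + (d:ℤ) = n + 3*(d:ℤ) by ring] at p1
    rw [show n + (d:ℤ) + (d:ℤ) = n + 2*(d:ℤ) by ring] at p2
    rw [p1, p2, p3]
  have ccper : ∀ t, cc x ((3*d : ℕ) : ℤ) t = cc x 0 t := by
    intro t
    rw [cc, cc]
    have := per3 0 t
    rw [zero_add] at this
    rw [show ((3*d:ℕ):ℤ) = 3*(d:ℤ) by push_cast; ring, this]
  set P : F2 → ℤ := fun u => Sm x u (3*d) with hP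
  have hPlow : ∀ u, (d:ℤ) ≤ P u := fun u => Sm_lower x Hok u d
  have hPup : ∀ u, P u ≤ 2*(3*(d:ℤ)) := by
    intro u
    have := (Sm_bounds x u (3*d)).2
    rw [hP]
    push_cast at this ⊢
    linarith
  have hS : ∀ u, xt x u = 0 → P (par x u) = 2 * P u := by
    intro u hu
    have h := sum_edgeS x Hok u hu (3*d)
    rw [ccper] at h
    simp only [hP]
    omega
  have hL3 : ∀ u, xt x u = 1 → 3 * P (par x u) = P u := by
    intro u hu
    have h := sum_edgeL x Hok u hu (3*d)
    rw [ccper] at h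
    simp only [hP]
    omega
  have infL : ∀ J : ℕ, ∃ j : ℕ, J ≤ j ∧ xt x ((par x)^[j] 1) = 1 := by
    by_contra hcon
    push_neg at hcon
    obtain ⟨J, hJ⟩ := hcon
    have hS' : ∀ i : ℕ, P ((par x)^[J + i] 1) = 2^i * P ((par x)^[J] 1) := by
      intro i
      induction i with
      | zero => simp
      | succ i ih =>
        have hall : xt x ((par x)^[J+i] 1) = 0 := by
          rcases fin2_cases (xt x ((par x)^[J+i] 1)) with h | h
          · exact h
          · exact absurd h (hJ (J+i) (by omega))
        rw [show J + (i+1) = (J + i) + 1 by ring, Function.iterate_succ_apply',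
          hS _ hall, ih, pow_succ]
        ring
    have hbig := hS' (6*d)
    have h1 : (d:ℤ) ≤ P ((par x)^[J] 1) := hPlow _
    have h2 : P ((par x)^[J + 6*d] 1) ≤ 2*(3*(d:ℤ)) := hPup _
    have hpow : ((6*d : ℕ):ℤ) < 2^(6*d) := by exact_mod_cast Nat.lt_two_pow_self (n := 6*d)
    have hmul : (2:ℤ)^(6*d) * (d:ℤ) ≤ 2^(6*d) * P ((par x)^[J] 1) :=
      mul_le_mul_of_nonneg_left h1 (by positivity)
    push_cast at hpow
    have hdle : (1:ℤ) ≤ (d:ℤ) := by exact_mod_cast hd1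
    nlinarith [hmul, hpow, hdle, hbig, h2]
  set bc : ℕ → ℕ :=
    fun j => ((Finset.range j).filter (fun i => xt x ((par x)^[i] 1) = 1)).card with hbc
  have bc_le : ∀ j, bc j ≤ j := by
    intro j
    calc bc j ≤ (Finset.range j).card := Finset.card_filter_le _ _
    _ = j := Finset.card_range j
  have bc_mono : ∀ {i j : ℕ}, i ≤ j → bc i ≤ bc j := by
    intro i j hij
    apply Finset.card_le_card
    exact Finset.filter_subset_filter _ (Finset.range_subset_range.mpr hij)
  have bc_succ : ∀ j, bc (j+1) = bc j + (if xt x ((par x)^[j] 1) = 1 then 1 else 0) := by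
    intro j
    simp only [hbc, Finset.range_add_one, Finset.filter_insert]
    split_ifs with h
    · rw [Finset.card_insert_of_notMem (by simp [Finset.mem_filter])]
    · omega
  have brel : ∀ j : ℕ, (3:ℤ)^(bc j) * P ((par x)^[j] 1) = 2^(j - bc j) * P 1 := by
    intro j
    induction j with
    | zero =>
      simp [hbc]
    | succ j ih =>
      have hbj := bc_le j
      rcases fin2_cases (xt x ((par x)^[j] 1)) with hτ | hτ
      · rw [bc_succ j, if_neg (by simp [hτ]), Function.iterate_succ_apply', hS _ hτ,
          show j + 1 - (bc j + 0) = (j - bc j) + 1 by omega, pow_succ]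
        calc (3:ℤ)^(bc j + 0) * (2 * P ((par x)^[j] 1))
            = 2 * ((3:ℤ)^(bc j) * P ((par x)^[j] 1)) := by ring
        _ = 2 * (2^(j - bc j) * P 1) := by rw [ih]
        _ = 2 ^ (j - bc j) * 2 * P 1 := by ring
      · rw [bc_succ j, if_pos hτ, Function.iterate_succ_apply',
          show j + 1 - (bc j + 1) = j - bc j by omega, pow_succ]
        calc (3:ℤ)^(bc j) * 3 * P (par x ((par x)^[j] 1))
            = 3^(bc j) * (3 * P (par x ((par x)^[j] 1))) := by ring
        _ = 3^(bc j) * P ((par x)^[j] 1) := by rw [hL3 _ hτ]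
        _ = 2^(j - bc j) * P 1 := ih
  have bc_unb : ∀ n : ℕ, ∃ j, n ≤ bc j := by
    intro n
    induction n with
    | zero => exact ⟨0, Nat.zero_le _⟩
    | succ n ih =>
      obtain ⟨j, hj⟩ := ih
      obtain ⟨j', hj'1, hj'2⟩ := infL j
      refine ⟨j' + 1, ?_⟩
      have h1 : bc (j'+1) = bc j' + 1 := by rw [bc_succ, if_pos hj'2]
      have h2 := bc_mono hj'1
      omega
  have hP1 : 0 < P 1 := lt_of_lt_of_le (by exact_mod_cast hd1) (hPlow 1)
  obtain ⟨j, hj⟩ := bc_unb ((P 1).toNat)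
  have hdvd : (3:ℤ)^(bc j) ∣ 2^(j - bc j) * P 1 := ⟨_, (brel j).symm⟩
  have hcop : IsCoprime ((3:ℤ)^(bc j)) ((2:ℤ)^(j - bc j)) := by
    apply IsCoprime.pow
    rw [Int.isCoprime_iff_gcd_eq_one]
    decide
  have hdvd2 : (3:ℤ)^(bc j) ∣ P 1 := hcop.dvd_of_dvd_mul_left hdvd
  have hle := Int.le_of_dvd hP1 hdvd2
  have hmono : (3:ℤ)^((P 1).toNat) ≤ 3^(bc j) := pow_le_pow_right₀ (by norm_num) hj
  have hlt : (((P 1).toNat : ℕ) : ℤ) < 3^((P 1).toNat) := by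
    exact_mod_cast (Nat.lt_pow_self (by norm_num : 1 < 3) : (P 1).toNat < 3 ^ (P 1).toNat)
  omega

-- ===== final assembly =====
theorem stab_triv (x : GG → Fin 72) (hx : x ∈ SFT LL) : Stab x = {1} := by
  have Hok := (mem_SFT_iff x).mp hx
  ext g
  simp only [Set.mem_singleton_iff]
  constructor
  · intro hg
    have hg' : Shift g x = x := hg
    obtain ⟨a, s⟩ := g
    set m := Multiplicative.toAdd a with hm
    have inv0 : ∀ (n : ℤ) (t : F2), x (site (n - m) (s⁻¹ * t)) = x (site n t) := by
      intro n t
      have h := congrFun hg' (site n t)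
      have key : ((a, s) : GG)⁻¹ * site n t = site (n - m) (s⁻¹ * t) := by
        simp only [site, Prod.inv_mk, Prod.mk_mul_mk, Prod.mk.injEq]
        constructor
        · rw [show a = Multiplicative.ofAdd m by rw [hm, ofAdd_toAdd],
            ← ofAdd_neg, ← ofAdd_add]
          congr 1
          ring
        · trivial
      rw [show Shift ((a, s) : GG) x (site n t) = x (((a, s) : GG)⁻¹ * site n t) from rfl,
        key] at h
      exact h
    have hinv : ∀ (n : ℤ) (t : F2), x (site n (s⁻¹ * t)) = x (site (n + m) t) := by
      intro n t
      have h := inv0 (n + m) t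
      rwa [show n + m - m = n by ring] at h
    have hs : s = 1 := stepA x Hok m s hinv
    subst hs
    have hinv' : ∀ (n : ℤ) (t : F2), x (site n t) = x (site (n + m) t) := by
      intro n t
      have h := hinv n t
      rwa [inv_one, one_mul] at h
    have hm0 : m = 0 := by
      by_contra hm0
      exact stepB x Hok m hinv' hm0
    have ha : a = 1 := by
      have h : a = Multiplicative.ofAdd m := by rw [hm, ofAdd_toAdd]
      rw [h, hm0]
      rfl
    rw [ha]
    rfl
  · rintro rfl
    show Shift 1 x = x
    funext k
    show x (1⁻¹ * k) = x k
    rw [inv_one, one_mul]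


/-- There is a strongly aperiodic SFT on `ℤ × F₂` (`F₂` the free group on two
generators): a nonempty finite alphabet `Fin m` and a finite set `L` of patterns over
`Γ = ℤ × F₂` whose SFT `X` is nonempty with `Stab(x) = {1}` for every `x ∈ X`. -/
theorem stmt_17 :
    ∃ (m : ℕ) (_ : 0 < m)
      (L : Set (Finset (Multiplicative ℤ × FreeGroup (Fin 2)) ×
        ((Multiplicative ℤ × FreeGroup (Fin 2)) → Fin m))),
      L.Finite ∧ (SFT L).Nonempty ∧
        ∀ x ∈ SFT L, Stab x = ({1} : Set (Multiplicative ℤ × FreeGroup (Fin 2))) := by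
  refine ⟨72, by norm_num, LL, LL_finite, ⟨model, (mem_SFT_iff model).mpr model_Ok⟩, ?_⟩
  intro x hx
  exact stab_triv x hx
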